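/- arXiv:1305.4274 — 5 statements merged into one kernel-verified Lean document; each statement's English description precedes it below -/
import Mathlib

section
/- For a Poisson random variable Z_ε with parameter ε and a bounded function f : ℕ → ℝ, the derivative with respect to ε of E[f(Z_ε)] equals E[f(Z_ε + 1)] − E[f(Z_ε)]. -/
/-- For `Z_ε` Poisson of parameter `ε` and bounded `f : ℕ → ℝ`,
`d/dε E[f(Z_ε)] = E[f(Z_ε + 1)] - E[f(Z_ε)]`. -/
theorem poisson_expectation_deriv
    (f : ℕ → ℝ) (M : ℝ) (hf : ∀ m, |f m| ≤ M) (ε : ℝ) (hε : 0 < ε) :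
    HasDerivAt
      (fun t : ℝ => ∑' m : ℕ, Real.exp (-t) * t ^ m / (Nat.factorial m) * f m)
      ((∑' m : ℕ, Real.exp (-ε) * ε ^ m / (Nat.factorial m) * f (m + 1)) -
        ∑' m : ℕ, Real.exp (-ε) * ε ^ m / (Nat.factorial m) * f m) ε := by
  have hM : 0 ≤ M := le_trans (abs_nonneg _) (hf 0)
  set R : ℝ := max (ε + 1) 1 with hR
  have hR1 : (1 : ℝ) ≤ R := le_max_right _ _
  have hεR : ε < R := lt_of_lt_of_le (by linarith) (le_max_left _ _)
  have hR0 : (0 : ℝ) < R := lt_of_lt_of_le one_pos hR1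
  set g' : ℕ → ℝ → ℝ := fun m x =>
    (Real.exp (-x) * -1 * x ^ m + Real.exp (-x) * (m * x ^ (m - 1))) / (Nat.factorial m) * f m
    with hg'
  set u : ℕ → ℝ := fun m => M * ((2 * R) ^ m / (Nat.factorial m)) with hu_def
  have hu : Summable u := (Real.summable_pow_div_factorial (2 * R)).mul_left M
  -- pointwise derivative
  have hderiv : ∀ (m : ℕ) (x : ℝ),
      HasDerivAt (fun t : ℝ => Real.exp (-t) * t ^ m / (Nat.factorial m) * f m) (g' m x) x := by
    intro m x
    have h1 : HasDerivAt (fun t : ℝ => Real.exp (-t)) (Real.exp (-x) * -1) x :=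
      (hasDerivAt_neg x).exp
    have h2 := (h1.mul (hasDerivAt_pow m x)).div_const (Nat.factorial m : ℝ)
    exact h2.mul_const (f m)
  -- key bound
  have key : ∀ (m : ℕ) (x : ℝ), 0 < x → x < R →
      Real.exp (-x) * x ^ m + Real.exp (-x) * (m * x ^ (m - 1)) ≤ (2 * R) ^ m := by
    intro m x hx0 hxR
    have hexp : Real.exp (-x) ≤ 1 := Real.exp_le_one_iff.mpr (by linarith)
    have hxm : x ^ m ≤ R ^ m := pow_le_pow_left₀ hx0.le hxR.le m
    have hxm1 : x ^ (m - 1) ≤ R ^ m :=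
      le_trans (pow_le_pow_left₀ hx0.le hxR.le _) (pow_le_pow_right₀ hR1 (Nat.sub_le m 1))
    have hm2 : (m : ℝ) + 1 ≤ 2 ^ m := by exact_mod_cast Nat.lt_two_pow_self (n := m)
    have hRm : (0:ℝ) ≤ R ^ m := pow_nonneg hR0.le m
    have hxm0 : (0:ℝ) ≤ x ^ m := pow_nonneg hx0.le m
    have hxm10 : (0:ℝ) ≤ x ^ (m-1) := pow_nonneg hx0.le _
    have hE : 0 < Real.exp (-x) := Real.exp_pos _
    have h2R : (2 * R) ^ m = 2 ^ m * R ^ m := mul_pow 2 R m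
    rw [h2R]
    have : Real.exp (-x) * x ^ m + Real.exp (-x) * (m * x ^ (m - 1))
        ≤ x ^ m + m * x ^ (m - 1) := by
      have := mul_le_of_le_one_left (hxm0) hexp
      have := mul_le_of_le_one_left (mul_nonneg (Nat.cast_nonneg m) hxm10) hexp
      nlinarith
    calc Real.exp (-x) * x ^ m + Real.exp (-x) * (m * x ^ (m - 1))
        ≤ x ^ m + m * x ^ (m - 1) := this
      _ ≤ R ^ m + m * R ^ m := by nlinarith [Nat.cast_nonneg (α := ℝ) m]
      _ = ((m : ℝ) + 1) * R ^ m := by ring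
      _ ≤ 2 ^ m * R ^ m := by nlinarith
  have hbound : ∀ (m : ℕ) (x : ℝ), x ∈ Set.Ioo (0:ℝ) R → ‖g' m x‖ ≤ u m := by
    intro m x hx
    obtain ⟨hx0, hxR⟩ := hx
    have hfact : (0:ℝ) < (Nat.factorial m : ℝ) := by exact_mod_cast Nat.factorial_pos m
    have hE : 0 < Real.exp (-x) := Real.exp_pos _
    have hxm0 : (0:ℝ) ≤ x ^ m := pow_nonneg hx0.le m
    have hxm10 : (0:ℝ) ≤ x ^ (m-1) := pow_nonneg hx0.le _
    have habs : |Real.exp (-x) * -1 * x ^ m + Real.exp (-x) * (m * x ^ (m - 1))|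
        ≤ Real.exp (-x) * x ^ m + Real.exp (-x) * (m * x ^ (m - 1)) := by
      rw [abs_le]
      constructor <;> nlinarith [mul_nonneg hE.le hxm0,
        mul_nonneg hE.le (mul_nonneg (Nat.cast_nonneg (α := ℝ) m) hxm10)]
    have h1 : ‖g' m x‖ = |Real.exp (-x) * -1 * x ^ m + Real.exp (-x) * (m * x ^ (m - 1))|
        / (Nat.factorial m) * |f m| := by
      rw [hg']
      simp [abs_mul, abs_div, abs_of_pos hfact]
    rw [h1, hu_def]
    have := key m x hx0 hxR
    have hfm := hf m
    have hfm0 := abs_nonneg (f m)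
    calc |Real.exp (-x) * -1 * x ^ m + Real.exp (-x) * (m * x ^ (m - 1))|
          / (Nat.factorial m) * |f m|
        ≤ (2 * R) ^ m / (Nat.factorial m) * M := by
          apply mul_le_mul _ hfm hfm0 (by positivity)
          gcongr
          exact le_trans habs this
      _ = M * ((2 * R) ^ m / (Nat.factorial m)) := by ring
  -- summability of pieces at ε
  have hεI : ε ∈ Set.Ioo (0:ℝ) R := ⟨hε, hεR⟩
  set A : ℕ → ℝ := fun m => Real.exp (-ε) * (m * ε ^ (m - 1)) / (Nat.factorial m) * f m with hA_def
  set B : ℕ → ℝ := fun m => Real.exp (-ε) * ε ^ m / (Nat.factorial m) * f m with hB_def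
  have hexpε : Real.exp (-ε) ≤ 1 := Real.exp_le_one_iff.mpr (by linarith)
  have hboundB : ∀ m, ‖B m‖ ≤ u m := by
    intro m
    have hfact : (0:ℝ) < (Nat.factorial m : ℝ) := by exact_mod_cast Nat.factorial_pos m
    have h1 : ‖B m‖ = Real.exp (-ε) * ε ^ m / (Nat.factorial m) * |f m| := by
      rw [hB_def]
      simp [abs_mul, abs_div, abs_of_pos hfact, abs_of_pos (Real.exp_pos _),
        abs_of_pos hε, abs_pow]
    rw [h1, hu_def]
    have hεm : ε ^ m ≤ (2*R) ^ m := pow_le_pow_left₀ hε.le (by linarith) m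
    have h2 : Real.exp (-ε) * ε ^ m ≤ (2*R) ^ m := by
      nlinarith [pow_pos hε m, (Real.exp_pos (-ε)).le]
    calc Real.exp (-ε) * ε ^ m / (Nat.factorial m) * |f m|
        ≤ (2 * R) ^ m / (Nat.factorial m) * M :=
          mul_le_mul (by gcongr) (hf m) (abs_nonneg _) (by positivity)
      _ = M * ((2 * R) ^ m / (Nat.factorial m)) := by ring
  have hboundA : ∀ m, ‖A m‖ ≤ u m := by
    intro m
    have hfact : (0:ℝ) < (Nat.factorial m : ℝ) := by exact_mod_cast Nat.factorial_pos m
    have h1 : ‖A m‖ = Real.exp (-ε) * (m * ε ^ (m-1)) / (Nat.factorial m) * |f m| := by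
      rw [hA_def]
      simp [abs_mul, abs_div, abs_of_pos hfact, abs_of_pos (Real.exp_pos _),
        abs_of_pos hε, abs_pow, abs_of_nonneg (Nat.cast_nonneg (α := ℝ) m)]
    rw [h1, hu_def]
    have h2 : Real.exp (-ε) * ((m:ℝ) * ε ^ (m-1)) ≤ (2*R) ^ m := by
      have hεm1 : ε ^ (m-1) ≤ R ^ m :=
        le_trans (pow_le_pow_left₀ hε.le hεR.le _) (pow_le_pow_right₀ hR1 (Nat.sub_le m 1))
      have hm2 : (m : ℝ) + 1 ≤ 2 ^ m := by exact_mod_cast Nat.lt_two_pow_self (n := m)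
      have h2R : (2 * R) ^ m = 2 ^ m * R ^ m := mul_pow 2 R m
      rw [h2R]
      have hεm10 : (0:ℝ) ≤ ε ^ (m-1) := by positivity
      have hRm : (0:ℝ) ≤ R ^ m := by positivity
      nlinarith [Nat.cast_nonneg (α := ℝ) m, (Real.exp_pos (-ε)).le,
        mul_le_of_le_one_left (mul_nonneg (Nat.cast_nonneg (α := ℝ) m) hεm10) hexpε]
    calc Real.exp (-ε) * ((m:ℝ) * ε ^ (m-1)) / (Nat.factorial m) * |f m|
        ≤ (2 * R) ^ m / (Nat.factorial m) * M :=
          mul_le_mul (by gcongr) (hf m) (abs_nonneg _) (by positivity)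
      _ = M * ((2 * R) ^ m / (Nat.factorial m)) := by ring
  have hsumA : Summable A := Summable.of_norm_bounded hu hboundA
  have hsumB : Summable B := Summable.of_norm_bounded hu hboundB
  -- apply term-by-term differentiation
  have main := hasDerivAt_tsum_of_isPreconnected hu isOpen_Ioo (convex_Ioo (0:ℝ) R).isPreconnected
    (fun m x _ => hderiv m x) hbound hεI hsumB hεI
  -- identify the derivative value
  have hval : (∑' m, g' m ε) =
      (∑' m : ℕ, Real.exp (-ε) * ε ^ m / (Nat.factorial m) * f (m + 1)) -
        ∑' m : ℕ, Real.exp (-ε) * ε ^ m / (Nat.factorial m) * f m := by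
    have h1 : ∀ m, g' m ε = A m - B m := by
      intro m
      rw [hg', hA_def, hB_def]
      ring
    rw [tsum_congr h1, Summable.tsum_sub hsumA hsumB]
    congr 1
    rw [Summable.tsum_eq_zero_add hsumA]
    have hA0 : A 0 = 0 := by simp [hA_def]
    rw [hA0, zero_add]
    apply tsum_congr
    intro m
    rw [hA_def]
    have hfact : ((Nat.factorial (m+1) : ℝ)) = (m+1) * (Nat.factorial m) := by
      push_cast [Nat.factorial_succ]; ring
    simp only []
    rw [hfact]
    have : ((m:ℝ)+1) ≠ 0 := by positivity
    have hfm : ((Nat.factorial m : ℝ)) ≠ 0 := by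
      exact_mod_cast (Nat.factorial_pos m).ne'
    push_cast
    field_simp
  rw [← hval]
  exact main
end

section
/- For any C, D ∈ ℝ and l ≥ 1, the Fourier–Walsh transform of v ↦ C^{l−|v|}D^{|v|} + D^{l−|v|}C^{|v|} at w ∈ 𝔽₂^l equals (C+D)^{l−|w|}(C−D)^{|w|}(1 + (−1)^{|w|}); in particular it vanishes when |w| is odd and is nonnegative when C, D ≥ 0. -/
/-- Hamming weight of a vector in 𝔽₂^l. -/
def wt {l : ℕ} (v : Fin l → ZMod 2) : ℕ := ∑ i, (v i).val

/-- The character `(-1)^{v·w}` on 𝔽₂^l. -/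
noncomputable def chi {l : ℕ} (v w : Fin l → ZMod 2) : ℝ :=
  (-1 : ℝ) ^ (∑ i, (v i * w i).val)

/-- Fourier–Walsh transform `F(g)(w) = Σ_v g(v) (−1)^{v·w}`. -/
noncomputable def FW {l : ℕ} (g : (Fin l → ZMod 2) → ℝ) (w : Fin l → ZMod 2) : ℝ :=
  ∑ v : Fin l → ZMod 2, g v * chi v w

lemma wt_eq_card {l : ℕ} (v : Fin l → ZMod 2) :
    wt v = (Finset.univ.filter (fun i => v i = 1)).card := by
  rw [wt, Finset.card_filter]
  refine Finset.sum_congr rfl fun i _ => ?_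
  revert v
  intro v
  have : ∀ a : ZMod 2, a.val = if a = 1 then 1 else 0 := by decide
  exact this (v i)

lemma wt_le {l : ℕ} (v : Fin l → ZMod 2) : wt v ≤ l := by
  rw [wt_eq_card]
  simpa using Finset.card_filter_le Finset.univ (fun i => v i = 1)

lemma prod_if_wt {l : ℕ} (v : Fin l → ZMod 2) (A B : ℝ) :
    (∏ i, if v i = 0 then A else B) = A ^ (l - wt v) * B ^ (wt v) := by
  have hsplit := Finset.prod_filter_mul_prod_filter_not Finset.univ (fun i => v i = 0)
    (fun i => if v i = 0 then A else B)
  rw [← hsplit]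
  rw [Finset.prod_congr rfl (fun i hi => by
    rw [Finset.mem_filter] at hi; simp [hi.2] : ∀ i ∈ Finset.univ.filter (fun i => v i = 0),
      (if v i = 0 then A else B) = A)]
  rw [Finset.prod_congr rfl (fun i hi => by
    rw [Finset.mem_filter] at hi; simp [hi.2] : ∀ i ∈ Finset.univ.filter (fun i => ¬ v i = 0),
      (if v i = 0 then A else B) = B)]
  rw [Finset.prod_const, Finset.prod_const]
  have h1 : (Finset.univ.filter (fun i => ¬ v i = 0)) =
      (Finset.univ.filter (fun i => v i = 1)) := by
    refine Finset.filter_congr fun i _ => ?_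
    have : ∀ a : ZMod 2, (¬ a = 0) ↔ a = 1 := by decide
    exact this (v i)
  have h2 : (Finset.univ.filter (fun i => v i = 0)).card = l - wt v := by
    have := Finset.card_filter_add_card_filter_not
      (s := (Finset.univ : Finset (Fin l))) (p := fun i => v i = 0)
    rw [h1] at this
    have hle : (Finset.univ.filter (fun i => v i = 1)).card ≤ l := by
      simpa using Finset.card_filter_le Finset.univ (fun i => v i = 1)
    have hcard : (Finset.univ : Finset (Fin l)).card = l := by simp
    rw [wt_eq_card]
    omega
  rw [h1, h2, ← wt_eq_card]

lemma FW_single {l : ℕ} (C D : ℝ) (w : Fin l → ZMod 2) :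
    (∑ v : Fin l → ZMod 2, C ^ (l - wt v) * D ^ (wt v) * chi v w)
      = (C + D) ^ (l - wt w) * (C - D) ^ (wt w) := by
  have key : ∀ v : Fin l → ZMod 2, C ^ (l - wt v) * D ^ (wt v) * chi v w
      = ∏ i, (if v i = 0 then C else D * (-1 : ℝ) ^ ((w i).val)) := by
    intro v
    rw [← prod_if_wt, chi, ← Finset.prod_pow_eq_pow_sum, ← Finset.prod_mul_distrib]
    refine Finset.prod_congr rfl fun i _ => ?_
    have : ∀ a : ZMod 2, (if a = 0 then C else D) * (-1 : ℝ) ^ ((a * w i).val)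
        = (if a = 0 then C else D * (-1 : ℝ) ^ ((w i).val)) := by
      intro a
      have ha : a = 0 ∨ a = 1 := by revert a; decide
      rcases ha with h | h <;> subst h <;> simp [ZMod.val_one]
    exact this (v i)
  rw [Finset.sum_congr rfl fun v _ => key v]
  rw [← Fintype.piFinset_univ,
    ← Finset.prod_univ_sum (fun _ => (Finset.univ : Finset (ZMod 2)))
      (fun i a => if a = 0 then C else D * (-1 : ℝ) ^ ((w i).val))]
  have : ∀ i, (∑ a : ZMod 2, if a = 0 then C else D * (-1 : ℝ) ^ ((w i).val))
      = (if w i = 0 then C + D else C - D) := by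
    intro i
    have huniv : (Finset.univ : Finset (ZMod 2)) = {0, 1} := by decide
    rw [huniv, Finset.sum_insert (by decide), Finset.sum_singleton]
    have hw : (w i) = 0 ∨ (w i) = 1 := by
      have : ∀ a : ZMod 2, a = 0 ∨ a = 1 := by decide
      exact this (w i)
    rcases hw with h | h <;> rw [h] <;> (simp [ZMod.val_one]; try ring)
  rw [Finset.prod_congr rfl fun i _ => this i]
  exact prod_if_wt w (C + D) (C - D)

/-- The Fourier–Walsh transform of `v ↦ C^{l−|v|} D^{|v|} + D^{l−|v|} C^{|v|}` equals
`(C+D)^{l−|w|} (C−D)^{|w|} (1 + (−1)^{|w|})`; it vanishes at odd-weight `w` and is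
nonnegative when `C, D ≥ 0`. -/
theorem walsh_transform_symmetric_pair
    (l : ℕ) (hl : 1 ≤ l) (C D : ℝ) (w : Fin l → ZMod 2) :
    FW (fun v => C ^ (l - wt v) * D ^ (wt v) + D ^ (l - wt v) * C ^ (wt v)) w
        = (C + D) ^ (l - wt w) * (C - D) ^ (wt w) * (1 + (-1 : ℝ) ^ (wt w))
      ∧ (Odd (wt w) →
          FW (fun v => C ^ (l - wt v) * D ^ (wt v) + D ^ (l - wt v) * C ^ (wt v)) w = 0)
      ∧ (0 ≤ C → 0 ≤ D →
          0 ≤ FW (fun v => C ^ (l - wt v) * D ^ (wt v) + D ^ (l - wt v) * C ^ (wt v)) w) := by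
  have main : FW (fun v => C ^ (l - wt v) * D ^ (wt v) + D ^ (l - wt v) * C ^ (wt v)) w
      = (C + D) ^ (l - wt w) * (C - D) ^ (wt w) * (1 + (-1 : ℝ) ^ (wt w)) := by
    rw [FW]
    simp only [add_mul]
    rw [Finset.sum_add_distrib, FW_single C D w, FW_single D C w]
    have h1 : (D + C) = (C + D) := by ring
    have h2 : (D - C) ^ (wt w) = (-1 : ℝ) ^ (wt w) * (C - D) ^ (wt w) := by
      rw [← mul_pow]; ring_nf
    rw [h1, h2]; ring
  refine ⟨main, fun hodd => ?_, fun hC hD => ?_⟩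
  · rw [main, hodd.neg_one_pow]; ring
  · rw [main]
    rcases Nat.even_or_odd (wt w) with he | ho
    · rw [he.neg_one_pow]
      have : (0:ℝ) ≤ (C - D) ^ (wt w) := he.pow_nonneg _
      have h1 : (0:ℝ) ≤ (C + D) ^ (l - wt w) := pow_nonneg (by linarith) _
      nlinarith
    · rw [ho.neg_one_pow]; ring_nf; simp
end

section
/- Let Z = (Z_1, …, Z_m) be discrete random variables that are conditionally independent given (X, Y), with each Z_j conditionally depending only on (X_{i_j}, X_{k_j}, Y_j). Then H(Z|Y) − H(Z|X,Y) ≤ Σ_{j=1}^m [H(Z_j|Y_j) − H(Z_j|X_{i_j}, X_{k_j}, Y_j)]. -/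
/-- Probability of an event under a mass function on a finite space. -/
def pr {Ω : Type} [Fintype Ω] (p : Ω → ℝ) (s : Ω → Prop) [DecidablePred s] : ℝ :=
  ∑ ω ∈ Finset.univ.filter s, p ω

/-- Shannon conditional entropy `H(X|Y)` on a finite probability space. -/
noncomputable def condEnt {Ω α β : Type} [Fintype Ω] [Fintype α] [Fintype β]
    [DecidableEq α] [DecidableEq β] (p : Ω → ℝ) (X : Ω → α) (Y : Ω → β) : ℝ :=
  -∑ x : α, ∑ y : β,
    (∑ ω ∈ Finset.univ.filter (fun ω => X ω = x ∧ Y ω = y), p ω) *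
      Real.log ((∑ ω ∈ Finset.univ.filter (fun ω => X ω = x ∧ Y ω = y), p ω) /
        (∑ ω ∈ Finset.univ.filter (fun ω => Y ω = y), p ω))

section helpers
variable {Ω : Type} [Fintype Ω] (p : Ω → ℝ)

lemma pr_congr {s t : Ω → Prop} [DecidablePred s] [DecidablePred t]
    (h : ∀ ω, s ω ↔ t ω) : pr p s = pr p t := by
  unfold pr; congr 1; ext ω; simp [h ω]

lemma pr_nonneg (hp0 : ∀ ω, 0 ≤ p ω) {s : Ω → Prop} [DecidablePred s] :
    0 ≤ pr p s :=
  Finset.sum_nonneg fun ω _ => hp0 ω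

lemma pr_pos (hp0 : ∀ ω, 0 ≤ p ω) {s : Ω → Prop} [DecidablePred s]
    (ω : Ω) (hs : s ω) (hω : 0 < p ω) : 0 < pr p s := by
  have : p ω ≤ pr p s :=
    Finset.single_le_sum (fun i _ => hp0 i) (by simp [hs])
  linarith

lemma pr_false : pr p (fun _ => False) = 0 := by simp [pr]

lemma fiber_sum {γ : Type} [Fintype γ] [DecidableEq γ] (W : Ω → γ) (f : γ → ℝ) :
    ∑ c : γ, pr p (fun ω => W ω = c) * f c = ∑ ω, p ω * f (W ω) := by
  unfold pr
  simp only [Finset.sum_filter, Finset.sum_mul]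
  rw [Finset.sum_comm]
  refine Finset.sum_congr rfl fun ω _ => ?_
  simp

lemma pr_fiber_decomp {γ : Type} [Fintype γ] [DecidableEq γ] (W : Ω → γ)
    (s : Ω → Prop) [DecidablePred s] :
    pr p s = ∑ c : γ, pr p (fun ω => W ω = c ∧ s ω) := by
  unfold pr
  simp only [Finset.sum_filter]
  rw [Finset.sum_comm]
  refine Finset.sum_congr rfl fun ω _ => ?_
  by_cases hs : s ω <;> simp [hs]

lemma condEnt_eq {α β : Type} [Fintype α] [Fintype β] [DecidableEq α] [DecidableEq β]
    (X : Ω → α) (Y : Ω → β) :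
    condEnt p X Y = -∑ ω, p ω *
      Real.log (pr p (fun ω' => X ω' = X ω ∧ Y ω' = Y ω) /
        pr p (fun ω' => Y ω' = Y ω)) := by
  unfold condEnt
  congr 1
  rw [← fiber_sum p (fun ω => (X ω, Y ω))
    (fun c => Real.log (pr p (fun ω' => X ω' = c.1 ∧ Y ω' = c.2) /
      pr p (fun ω' => Y ω' = c.2)))]
  rw [Fintype.sum_prod_type]
  refine Finset.sum_congr rfl fun x _ => Finset.sum_congr rfl fun y _ => ?_
  have h : pr p (fun ω => (X ω, Y ω) = (x, y)) = pr p (fun ω => X ω = x ∧ Y ω = y) :=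
    pr_congr p (fun ω => by simp [Prod.ext_iff])
  rw [h]
  rfl

end helpers

lemma sum_g_le_one {Ω 𝒴 𝒵 : Type} [Fintype Ω] [Fintype 𝒴] [Fintype 𝒵]
    [DecidableEq 𝒴] [DecidableEq 𝒵] {m : ℕ}
    (p : Ω → ℝ) (hp0 : ∀ ω, 0 ≤ p ω) (hp1 : ∑ ω, p ω = 1)
    (Y : Ω → Fin m → 𝒴) (Z : Ω → Fin m → 𝒵) :
    ∑ ω, p ω * (pr p (fun ω' => Y ω' = Y ω) / pr p (fun ω' => Z ω' = Z ω ∧ Y ω' = Y ω) *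
      ∏ j, pr p (fun ω' => Z ω' j = Z ω j ∧ Y ω' j = Y ω j) /
        pr p (fun ω' => Y ω' j = Y ω j)) ≤ 1 := by
  -- inner bound: for fixed y, the sum over z of the product of ratios is ≤ 1
  have inner : ∀ (y : Fin m → 𝒴),
      ∑ z : Fin m → 𝒵, ∏ j, pr p (fun ω' => Z ω' j = z j ∧ Y ω' j = y j) /
        pr p (fun ω' => Y ω' j = y j) ≤ 1 := by
    intro y
    have e : ∑ z : Fin m → 𝒵, ∏ j, pr p (fun ω' => Z ω' j = z j ∧ Y ω' j = y j) /
        pr p (fun ω' => Y ω' j = y j)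
        = ∏ j, ∑ v : 𝒵, pr p (fun ω' => Z ω' j = v ∧ Y ω' j = y j) /
          pr p (fun ω' => Y ω' j = y j) :=
      (Fintype.prod_sum fun j (v : 𝒵) => pr p (fun ω' => Z ω' j = v ∧ Y ω' j = y j) /
        pr p (fun ω' => Y ω' j = y j)).symm
    rw [e]
    refine Finset.prod_le_one (fun j _ => ?_) (fun j _ => ?_)
    · exact Finset.sum_nonneg fun v _ => div_nonneg (pr_nonneg p hp0) (pr_nonneg p hp0)
    · rw [← Finset.sum_div,
        ← pr_fiber_decomp p (fun ω => Z ω j) (fun ω => Y ω j = y j)]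
      exact div_self_le_one _
  calc ∑ ω, p ω * (pr p (fun ω' => Y ω' = Y ω) /
          pr p (fun ω' => Z ω' = Z ω ∧ Y ω' = Y ω) *
        ∏ j, pr p (fun ω' => Z ω' j = Z ω j ∧ Y ω' j = Y ω j) /
          pr p (fun ω' => Y ω' j = Y ω j))
      = ∑ c : (Fin m → 𝒴) × (Fin m → 𝒵), pr p (fun ω => (Y ω, Z ω) = c) *
          (pr p (fun ω' => Y ω' = c.1) / pr p (fun ω' => Z ω' = c.2 ∧ Y ω' = c.1) *
            ∏ j, pr p (fun ω' => Z ω' j = c.2 j ∧ Y ω' j = c.1 j) /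
              pr p (fun ω' => Y ω' j = c.1 j)) :=
        (fiber_sum p (fun ω => (Y ω, Z ω)) (fun c =>
          pr p (fun ω' => Y ω' = c.1) / pr p (fun ω' => Z ω' = c.2 ∧ Y ω' = c.1) *
            ∏ j, pr p (fun ω' => Z ω' j = c.2 j ∧ Y ω' j = c.1 j) /
              pr p (fun ω' => Y ω' j = c.1 j))).symm
    _ ≤ ∑ c : (Fin m → 𝒴) × (Fin m → 𝒵), pr p (fun ω' => Y ω' = c.1) *
          ∏ j, pr p (fun ω' => Z ω' j = c.2 j ∧ Y ω' j = c.1 j) /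
              pr p (fun ω' => Y ω' j = c.1 j) := by
        refine Finset.sum_le_sum fun c _ => ?_
        have hswap : pr p (fun ω => (Y ω, Z ω) = c)
            = pr p (fun ω => Z ω = c.2 ∧ Y ω = c.1) := by
          refine pr_congr p fun ω => ?_
          constructor
          · intro h1; exact ⟨congrArg Prod.snd h1, congrArg Prod.fst h1⟩
          · rintro ⟨h1, h2⟩; rw [Prod.ext_iff]; exact ⟨h2, h1⟩
        rw [hswap]
        rcases eq_or_ne (pr p (fun ω => Z ω = c.2 ∧ Y ω = c.1)) 0 with h | h
        · rw [h, zero_mul]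
          exact mul_nonneg (pr_nonneg p hp0)
            (Finset.prod_nonneg fun j _ => div_nonneg (pr_nonneg p hp0) (pr_nonneg p hp0))
        · apply le_of_eq
          rw [← mul_assoc, mul_comm (pr p fun ω => Z ω = c.2 ∧ Y ω = c.1)
            (pr p (fun ω' => Y ω' = c.1) / pr p fun ω => Z ω = c.2 ∧ Y ω = c.1),
            div_mul_cancel₀ _ h]
    _ = ∑ y : Fin m → 𝒴, pr p (fun ω' => Y ω' = y) *
          ∑ z : Fin m → 𝒵, ∏ j, pr p (fun ω' => Z ω' j = z j ∧ Y ω' j = y j) /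
              pr p (fun ω' => Y ω' j = y j) := by
        rw [Fintype.sum_prod_type]
        exact Finset.sum_congr rfl fun y _ => by rw [Finset.mul_sum]
    _ ≤ ∑ y : Fin m → 𝒴, pr p (fun ω' => Y ω' = y) * 1 :=
        Finset.sum_le_sum fun y _ =>
          mul_le_mul_of_nonneg_left (inner y) (pr_nonneg p hp0)
    _ = 1 := by
        rw [fiber_sum p Y (fun _ => (1 : ℝ))]
        simpa using hp1

lemma marg {Ω 𝒳 𝒴 𝒵 : Type} [Fintype Ω] [Fintype 𝒳] [Fintype 𝒴] [Fintype 𝒵]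
    [DecidableEq 𝒳] [DecidableEq 𝒴] [DecidableEq 𝒵] {n m : ℕ}
    (p : Ω → ℝ) (X : Ω → Fin n → 𝒳) (Y : Ω → Fin m → 𝒴) (Zj : Ω → 𝒵)
    (i k : Fin n) (j : Fin m) (κ : 𝒳 → 𝒳 → 𝒴 → 𝒵 → ℝ)
    (hdep : ∀ x y z, pr p (fun ω => X ω = x ∧ Y ω = y ∧ Zj ω = z)
        = pr p (fun ω => X ω = x ∧ Y ω = y) * κ (x i) (x k) (y j) z)
    (a b : 𝒳) (c : 𝒴) (z : 𝒵) :
    pr p (fun ω => (X ω i, X ω k, Y ω j) = (a, b, c) ∧ Zj ω = z)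
      = pr p (fun ω => (X ω i, X ω k, Y ω j) = (a, b, c)) * κ a b c z := by
  rw [pr_fiber_decomp p (fun ω => (X ω, Y ω))
      (fun ω => (X ω i, X ω k, Y ω j) = (a, b, c) ∧ Zj ω = z),
    pr_fiber_decomp p (fun ω => (X ω, Y ω))
      (fun ω => (X ω i, X ω k, Y ω j) = (a, b, c)),
    Finset.sum_mul]
  rw [Fintype.sum_prod_type, Fintype.sum_prod_type]
  refine Finset.sum_congr rfl fun x _ => Finset.sum_congr rfl fun y _ => ?_
  by_cases h : (x i, x k, y j) = (a, b, c)
  · obtain ⟨ha, hb, hc⟩ : x i = a ∧ x k = b ∧ y j = c := by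
      simpa [Prod.ext_iff] using h
    subst ha; subst hb; subst hc
    have e1 : pr p (fun ω => (X ω, Y ω) = (x, y) ∧
          (X ω i, X ω k, Y ω j) = (x i, x k, y j) ∧ Zj ω = z)
        = pr p (fun ω => X ω = x ∧ Y ω = y ∧ Zj ω = z) := by
      refine pr_congr p fun ω => ?_
      constructor
      · rintro ⟨h1, -, h3⟩
        exact ⟨congrArg Prod.fst h1, congrArg Prod.snd h1, h3⟩
      · rintro ⟨h1, h2, h3⟩
        exact ⟨by rw [h1, h2], by rw [h1, h2], h3⟩
    have e2 : pr p (fun ω => (X ω, Y ω) = (x, y) ∧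
          (X ω i, X ω k, Y ω j) = (x i, x k, y j))
        = pr p (fun ω => X ω = x ∧ Y ω = y) := by
      refine pr_congr p fun ω => ?_
      constructor
      · rintro ⟨h1, -⟩
        exact ⟨congrArg Prod.fst h1, congrArg Prod.snd h1⟩
      · rintro ⟨h1, h2⟩
        exact ⟨by rw [h1, h2], by rw [h1, h2]⟩
    rw [e1, e2, hdep x y z]
  · have e1 : pr p (fun ω => (X ω, Y ω) = (x, y) ∧
          (X ω i, X ω k, Y ω j) = (a, b, c) ∧ Zj ω = z) = 0 := by
      rw [pr_congr p (t := fun _ => False) ?_, pr_false]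
      intro ω
      simp only [iff_false]
      rintro ⟨h1, h2, -⟩
      have hx : X ω = x := congrArg Prod.fst h1
      have hy : Y ω = y := congrArg Prod.snd h1
      rw [hx, hy] at h2
      exact h h2
    have e2 : pr p (fun ω => (X ω, Y ω) = (x, y) ∧
          (X ω i, X ω k, Y ω j) = (a, b, c)) = 0 := by
      rw [pr_congr p (t := fun _ => False) ?_, pr_false]
      intro ω
      simp only [iff_false]
      rintro ⟨h1, h2⟩
      have hx : X ω = x := congrArg Prod.fst h1
      have hy : Y ω = y := congrArg Prod.snd h1
      rw [hx, hy] at h2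
      exact h h2
    rw [e1, e2, zero_mul]



/-- If `Z₁,…,Z_m` are conditionally independent given `(X,Y)`, with `Z_j` depending
conditionally only on `(X_{i_j}, X_{k_j}, Y_j)` (through a kernel `κ j`), then
`H(Z|Y) − H(Z|X,Y) ≤ Σ_j [H(Z_j|Y_j) − H(Z_j|X_{i_j},X_{k_j},Y_j)]`. -/
theorem cond_indep_entropy_difference_subadditive
    {Ω 𝒳 𝒴 𝒵 : Type} [Fintype Ω] [Fintype 𝒳] [Fintype 𝒴] [Fintype 𝒵]
    [DecidableEq 𝒳] [DecidableEq 𝒴] [DecidableEq 𝒵]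
    (n m : ℕ)
    (p : Ω → ℝ) (hp0 : ∀ ω, 0 ≤ p ω) (hp1 : ∑ ω, p ω = 1)
    (X : Ω → Fin n → 𝒳) (Y : Ω → Fin m → 𝒴) (Z : Ω → Fin m → 𝒵)
    (idx kdx : Fin m → Fin n)
    (κ : Fin m → 𝒳 → 𝒳 → 𝒴 → 𝒵 → ℝ)
    (hdep : ∀ (j : Fin m) (x : Fin n → 𝒳) (y : Fin m → 𝒴) (z : 𝒵),
      pr p (fun ω => X ω = x ∧ Y ω = y ∧ Z ω j = z)
        = pr p (fun ω => X ω = x ∧ Y ω = y) * κ j (x (idx j)) (x (kdx j)) (y j) z)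
    (hindep : ∀ (x : Fin n → 𝒳) (y : Fin m → 𝒴) (z : Fin m → 𝒵),
      pr p (fun ω => X ω = x ∧ Y ω = y ∧ Z ω = z)
        = pr p (fun ω => X ω = x ∧ Y ω = y) *
            ∏ j : Fin m, κ j (x (idx j)) (x (kdx j)) (y j) (z j)) :
    condEnt p Z Y - condEnt p Z (fun ω => (X ω, Y ω))
      ≤ ∑ j : Fin m,
          (condEnt p (fun ω => Z ω j) (fun ω => Y ω j)
            - condEnt p (fun ω => Z ω j)
                (fun ω => (X ω (idx j), X ω (kdx j), Y ω j))) := by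
  have hrw1 : condEnt p Z Y = -∑ ω, p ω * Real.log (pr p (fun ω' => Z ω' = Z ω ∧ Y ω' = Y ω) / pr p (fun ω' => Y ω' = Y ω)) := condEnt_eq p Z Y
  have hrw2 : condEnt p Z (fun ω => (X ω, Y ω)) = -∑ ω, p ω * Real.log (pr p (fun ω' => Z ω' = Z ω ∧ (X ω', Y ω') = (X ω, Y ω)) / pr p (fun ω' => (X ω', Y ω') = (X ω, Y ω))) :=
    condEnt_eq p Z (fun ω => (X ω, Y ω))
  have hrw3 : ∀ j : Fin m, condEnt p (fun ω => Z ω j) (fun ω => Y ω j)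
      = -∑ ω, p ω * Real.log (pr p (fun ω' => Z ω' j = Z ω j ∧ Y ω' j = Y ω j) / pr p (fun ω' => Y ω' j = Y ω j)) := fun j => condEnt_eq p _ _
  have hrw4 : ∀ j : Fin m,
      condEnt p (fun ω => Z ω j) (fun ω => (X ω (idx j), X ω (kdx j), Y ω j))
      = -∑ ω, p ω * Real.log (pr p (fun ω' => Z ω' j = Z ω j ∧ (X ω' (idx j), X ω' (kdx j), Y ω' j) = (X ω (idx j), X ω (kdx j), Y ω j)) / pr p (fun ω' => (X ω' (idx j), X ω' (kdx j), Y ω' j) = (X ω (idx j), X ω (kdx j), Y ω j))) := fun j => condEnt_eq p _ _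
  -- pointwise log-inequality
  have pointwise : ∀ ω : Ω,
      p ω * (Real.log (pr p (fun ω' => Z ω' = Z ω ∧ (X ω', Y ω') = (X ω, Y ω)) / pr p (fun ω' => (X ω', Y ω') = (X ω, Y ω))) - Real.log (pr p (fun ω' => Z ω' = Z ω ∧ Y ω' = Y ω) / pr p (fun ω' => Y ω' = Y ω)) + ∑ j : Fin m, (Real.log (pr p (fun ω' => Z ω' j = Z ω j ∧ Y ω' j = Y ω j) / pr p (fun ω' => Y ω' j = Y ω j)) - Real.log (pr p (fun ω' => Z ω' j = Z ω j ∧ (X ω' (idx j), X ω' (kdx j), Y ω' j) = (X ω (idx j), X ω (kdx j), Y ω j)) / pr p (fun ω' => (X ω' (idx j), X ω' (kdx j), Y ω' j) = (X ω (idx j), X ω (kdx j), Y ω j))))) ≤ p ω * (pr p (fun ω' => Y ω' = Y ω) / pr p (fun ω' => Z ω' = Z ω ∧ Y ω' = Y ω) * ∏ j, pr p (fun ω' => Z ω' j = Z ω j ∧ Y ω' j = Y ω j) / pr p (fun ω' => Y ω' j = Y ω j) - 1) := by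
    intro ω
    rcases eq_or_lt_of_le (hp0 ω) with h0 | h0
    · rw [← h0]; simp
    have posY : 0 < pr p (fun ω' => Y ω' = Y ω) := pr_pos p hp0 ω rfl h0
    have posZY : 0 < pr p (fun ω' => Z ω' = Z ω ∧ Y ω' = Y ω) := pr_pos p hp0 ω ⟨rfl, rfl⟩ h0
    have posXY : 0 < pr p (fun ω' => (X ω', Y ω') = (X ω, Y ω)) := pr_pos p hp0 ω rfl h0
    have posYj : ∀ j : Fin m, 0 < pr p (fun ω' => Y ω' j = Y ω j) := fun j => pr_pos p hp0 ω rfl h0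
    have posZYj : ∀ j : Fin m, 0 < pr p (fun ω' => Z ω' j = Z ω j ∧ Y ω' j = Y ω j) := fun j => pr_pos p hp0 ω ⟨rfl, rfl⟩ h0
    have posTj : ∀ j : Fin m, 0 < pr p (fun ω' => (X ω' (idx j), X ω' (kdx j), Y ω' j) = (X ω (idx j), X ω (kdx j), Y ω j)) := fun j => pr_pos p hp0 ω rfl h0
    have posZTj : ∀ j : Fin m, 0 < pr p (fun ω' => Z ω' j = Z ω j ∧ (X ω' (idx j), X ω' (kdx j), Y ω' j) = (X ω (idx j), X ω (kdx j), Y ω j)) := fun j => pr_pos p hp0 ω ⟨rfl, rfl⟩ h0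
    have fact1 : pr p (fun ω' => Z ω' = Z ω ∧ (X ω', Y ω') = (X ω, Y ω)) = pr p (fun ω' => (X ω', Y ω') = (X ω, Y ω)) * ∏ j, κ j (X ω (idx j)) (X ω (kdx j)) (Y ω j) (Z ω j) := by
      have e1 : pr p (fun ω' => Z ω' = Z ω ∧ (X ω', Y ω') = (X ω, Y ω)) = pr p (fun ω' => X ω' = X ω ∧ Y ω' = Y ω ∧ Z ω' = Z ω) := by
        refine pr_congr p fun ω' => ?_
        constructor
        · rintro ⟨hz, hxy⟩
          exact ⟨congrArg Prod.fst hxy, congrArg Prod.snd hxy, hz⟩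
        · rintro ⟨hx, hy, hz⟩
          exact ⟨hz, by rw [hx, hy]⟩
      have e2 : pr p (fun ω' => (X ω', Y ω') = (X ω, Y ω)) = pr p (fun ω' => X ω' = X ω ∧ Y ω' = Y ω) := by
        refine pr_congr p fun ω' => ?_
        constructor
        · intro hxy; exact ⟨congrArg Prod.fst hxy, congrArg Prod.snd hxy⟩
        · rintro ⟨hx, hy⟩; rw [Prod.ext_iff]; exact ⟨hx, hy⟩
      rw [e1, e2, hindep (X ω) (Y ω) (Z ω)]
    have fact2 : ∀ j : Fin m, pr p (fun ω' => Z ω' j = Z ω j ∧ (X ω' (idx j), X ω' (kdx j), Y ω' j) = (X ω (idx j), X ω (kdx j), Y ω j)) = pr p (fun ω' => (X ω' (idx j), X ω' (kdx j), Y ω' j) = (X ω (idx j), X ω (kdx j), Y ω j)) * κ j (X ω (idx j)) (X ω (kdx j)) (Y ω j) (Z ω j) := by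
      intro j
      have e1 : pr p (fun ω' => Z ω' j = Z ω j ∧ (X ω' (idx j), X ω' (kdx j), Y ω' j) = (X ω (idx j), X ω (kdx j), Y ω j))
          = pr p (fun ω' => (X ω' (idx j), X ω' (kdx j), Y ω' j) = (X ω (idx j), X ω (kdx j), Y ω j) ∧ Z ω' j = Z ω j) :=
        pr_congr p fun ω' => and_comm
      rw [e1]
      exact marg p X Y (fun ω => Z ω j) (idx j) (kdx j) j (κ j)
        (fun x y z => hdep j x y z) (X ω (idx j)) (X ω (kdx j)) (Y ω j) (Z ω j)
    have κpos : ∀ j : Fin m, 0 < κ j (X ω (idx j)) (X ω (kdx j)) (Y ω j) (Z ω j) := by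
      intro j
      have h2 := posZTj j
      rw [fact2 j] at h2
      exact pos_of_mul_pos_right h2 (le_of_lt (posTj j))
    have posXYZ : 0 < pr p (fun ω' => Z ω' = Z ω ∧ (X ω', Y ω') = (X ω, Y ω)) := pr_pos p hp0 ω ⟨rfl, rfl⟩ h0
    have log1 : Real.log (pr p (fun ω' => Z ω' = Z ω ∧ (X ω', Y ω') = (X ω, Y ω)) / pr p (fun ω' => (X ω', Y ω') = (X ω, Y ω))) = ∑ j, Real.log (κ j (X ω (idx j)) (X ω (kdx j)) (Y ω j) (Z ω j)) := by
      rw [fact1, mul_comm, mul_div_assoc, div_self (ne_of_gt posXY), mul_one,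
        Real.log_prod (fun j _ => ne_of_gt (κpos j))]
    have log2 : ∀ j : Fin m, Real.log (pr p (fun ω' => Z ω' j = Z ω j ∧ (X ω' (idx j), X ω' (kdx j), Y ω' j) = (X ω (idx j), X ω (kdx j), Y ω j)) / pr p (fun ω' => (X ω' (idx j), X ω' (kdx j), Y ω' j) = (X ω (idx j), X ω (kdx j), Y ω j))) = Real.log (κ j (X ω (idx j)) (X ω (kdx j)) (Y ω j) (Z ω j)) := by
      intro j
      rw [fact2 j, mul_comm, mul_div_assoc, div_self (ne_of_gt (posTj j)), mul_one]
    have Ppos : 0 < ∏ j, pr p (fun ω' => Z ω' j = Z ω j ∧ Y ω' j = Y ω j) / pr p (fun ω' => Y ω' j = Y ω j) :=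
      Finset.prod_pos fun j _ => div_pos (posZYj j) (posYj j)
    have Gpos : 0 < pr p (fun ω' => Y ω' = Y ω) / pr p (fun ω' => Z ω' = Z ω ∧ Y ω' = Y ω) * ∏ j, pr p (fun ω' => Z ω' j = Z ω j ∧ Y ω' j = Y ω j) / pr p (fun ω' => Y ω' j = Y ω j) := mul_pos (div_pos posY posZY) Ppos
    have EG : Real.log (pr p (fun ω' => Z ω' = Z ω ∧ (X ω', Y ω') = (X ω, Y ω)) / pr p (fun ω' => (X ω', Y ω') = (X ω, Y ω))) - Real.log (pr p (fun ω' => Z ω' = Z ω ∧ Y ω' = Y ω) / pr p (fun ω' => Y ω' = Y ω)) + ∑ j : Fin m, (Real.log (pr p (fun ω' => Z ω' j = Z ω j ∧ Y ω' j = Y ω j) / pr p (fun ω' => Y ω' j = Y ω j)) - Real.log (pr p (fun ω' => Z ω' j = Z ω j ∧ (X ω' (idx j), X ω' (kdx j), Y ω' j) = (X ω (idx j), X ω (kdx j), Y ω j)) / pr p (fun ω' => (X ω' (idx j), X ω' (kdx j), Y ω' j) = (X ω (idx j), X ω (kdx j), Y ω j)))) = Real.log (pr p (fun ω' => Y ω'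 = Y ω) / pr p (fun ω' => Z ω' = Z ω ∧ Y ω' = Y ω) * ∏ j, pr p (fun ω' => Z ω' j = Z ω j ∧ Y ω' j = Y ω j) / pr p (fun ω' => Y ω' j = Y ω j)) := by
      rw [log1]
      simp only [log2]
      rw [Finset.sum_sub_distrib]
      rw [Real.log_mul (ne_of_gt (div_pos posY posZY)) (ne_of_gt Ppos),
        Real.log_prod (fun j _ => ne_of_gt (div_pos (posZYj j) (posYj j)))]
      simp only [Real.log_div (ne_of_gt (posZYj _)) (ne_of_gt (posYj _))]
      rw [Real.log_div (ne_of_gt posZY) (ne_of_gt posY),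
        Real.log_div (ne_of_gt posY) (ne_of_gt posZY)]
      ring
    calc p ω * (Real.log (pr p (fun ω' => Z ω' = Z ω ∧ (X ω', Y ω') = (X ω, Y ω)) / pr p (fun ω' => (X ω', Y ω') = (X ω, Y ω))) - Real.log (pr p (fun ω' => Z ω' = Z ω ∧ Y ω' = Y ω) / pr p (fun ω' => Y ω' = Y ω)) + ∑ j : Fin m, (Real.log (pr p (fun ω' => Z ω' j = Z ω j ∧ Y ω' j = Y ω j) / pr p (fun ω' => Y ω' j = Y ω j)) - Real.log (pr p (fun ω' => Z ω' j = Z ω j ∧ (X ω' (idx j), X ω' (kdx j), Y ω' j) = (X ω (idx j), X ω (kdx j), Y ω j)) / pr p (fun ω' => (X ω' (idx j), X ω' (kdx j), Y ω' j) = (X ω (idx j), X ω (kdx j), Y ω j))))) = p ω * Real.log (pr p (fun ω' => Y ω' = Y ω) / pr p (fun ω' => Z ω' = Z ω ∧ Y ω' = Y ω) * ∏ j, pr p (fun ω' => Z ω' j = Z ω j ∧ Y ω' j = Y ω j) / pr p (fun ω' => Y ω' j = Y ω j)) := by rw [EG]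
      _ ≤ p ω * (pr p (fun ω' => Y ω' = Y ω) / pr p (fun ω' => Z ω' = Z ω ∧ Y ω' = Y ω) * ∏ j, pr p (fun ω' => Z ω' j = Z ω j ∧ Y ω' j = Y ω j) / pr p (fun ω' => Y ω' j = Y ω j) - 1) :=
        mul_le_mul_of_nonneg_left (Real.log_le_sub_one_of_pos Gpos) (le_of_lt h0)
  -- sum bound
  have hGsum : ∑ ω, p ω * (pr p (fun ω' => Y ω' = Y ω) / pr p (fun ω' => Z ω' = Z ω ∧ Y ω' = Y ω) * ∏ j, pr p (fun ω' => Z ω' j = Z ω j ∧ Y ω' j = Y ω j) / pr p (fun ω' => Y ω' j = Y ω j)) ≤ 1 := sum_g_le_one p hp0 hp1 Y Z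
  have key : ∑ ω, p ω * (Real.log (pr p (fun ω' => Z ω' = Z ω ∧ (X ω', Y ω') = (X ω, Y ω)) / pr p (fun ω' => (X ω', Y ω') = (X ω, Y ω))) - Real.log (pr p (fun ω' => Z ω' = Z ω ∧ Y ω' = Y ω) / pr p (fun ω' => Y ω' = Y ω)) + ∑ j : Fin m, (Real.log (pr p (fun ω' => Z ω' j = Z ω j ∧ Y ω' j = Y ω j) / pr p (fun ω' => Y ω' j = Y ω j)) - Real.log (pr p (fun ω' => Z ω' j = Z ω j ∧ (X ω' (idx j), X ω' (kdx j), Y ω' j) = (X ω (idx j), X ω (kdx j), Y ω j)) / pr p (fun ω' => (X ω' (idx j), X ω' (kdx j), Y ω' j) = (X ω (idx j), X ω (kdx j), Y ω j))))) ≤ 0 := by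
    calc ∑ ω, p ω * (Real.log (pr p (fun ω' => Z ω' = Z ω ∧ (X ω', Y ω') = (X ω, Y ω)) / pr p (fun ω' => (X ω', Y ω') = (X ω, Y ω))) - Real.log (pr p (fun ω' => Z ω' = Z ω ∧ Y ω' = Y ω) / pr p (fun ω' => Y ω' = Y ω)) + ∑ j : Fin m, (Real.log (pr p (fun ω' => Z ω' j = Z ω j ∧ Y ω' j = Y ω j) / pr p (fun ω' => Y ω' j = Y ω j)) - Real.log (pr p (fun ω' => Z ω' j = Z ω j ∧ (X ω' (idx j), X ω' (kdx j), Y ω' j) = (X ω (idx j), X ω (kdx j), Y ω j)) / pr p (fun ω' => (X ω' (idx j), X ω' (kdx j), Y ω' j) = (X ω (idx j), X ω (kdx j), Y ω j))))) ≤ ∑ ω, p ω * (pr p (fun ω' => Y ω' = Y ω) / pr p (fun ω' => Z ω' = Z ω ∧ Y ω' = Y ω) * ∏ j, pr p (fun ω' => Z ω' j = Z ω j ∧ Y ω' j = Y ω j) / pr p (fun ω' => Y ω' j = Y ω j) - 1) :=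
          Finset.sum_le_sum fun ω _ => pointwise ω
      _ = ∑ ω, (p ω * (pr p (fun ω' => Y ω' = Y ω) / pr p (fun ω' => Z ω' = Z ω ∧ Y ω' = Y ω) * ∏ j, pr p (fun ω' => Z ω' j = Z ω j ∧ Y ω' j = Y ω j) / pr p (fun ω' => Y ω' j = Y ω j)) - p ω) := Finset.sum_congr rfl fun ω _ => by ring
      _ = (∑ ω, p ω * (pr p (fun ω' => Y ω' = Y ω) / pr p (fun ω' => Z ω' = Z ω ∧ Y ω' = Y ω) * ∏ j, pr p (fun ω' => Z ω' j = Z ω j ∧ Y ω' j = Y ω j) / pr p (fun ω' => Y ω' j = Y ω j))) - ∑ ω, p ω := Finset.sum_sub_distrib _ _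
      _ ≤ 1 - 1 := by rw [hp1]; exact sub_le_sub_right hGsum _
      _ = 0 := sub_self 1
  have c1 : ∑ ω : Ω, ∑ j : Fin m, p ω * (Real.log (pr p (fun ω' => Z ω' j = Z ω j ∧ Y ω' j = Y ω j) / pr p (fun ω' => Y ω' j = Y ω j))) = ∑ j : Fin m, ∑ ω : Ω, p ω * (Real.log (pr p (fun ω' => Z ω' j = Z ω j ∧ Y ω' j = Y ω j) / pr p (fun ω' => Y ω' j = Y ω j))) :=
    Finset.sum_comm
  have c2 : ∑ ω : Ω, ∑ j : Fin m, p ω * (Real.log (pr p (fun ω' => Z ω' j = Z ω j ∧ (X ω' (idx j), X ω' (kdx j), Y ω' j) = (X ω (idx j), X ω (kdx j), Y ω j)) / pr p (fun ω' => (X ω' (idx j), X ω' (kdx j), Y ω' j) = (X ω (idx j), X ω (kdx j), Y ω j)))) = ∑ j : Fin m, ∑ ω : Ω, p ω * (Real.log (pr p (fun ω' => Z ω' j = Z ω j ∧ (X ω' (idx j), X ω' (kdx j), Y ω' j) = (X ω (idx j), X ω (kdx j), Y ω j)) / pr p (fun ω' => (X ω' (idx j), X ω' (kdx j), Y ω'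 j) = (X ω (idx j), X ω (kdx j), Y ω j)))) :=
    Finset.sum_comm
  have expand : ∑ ω, p ω * (Real.log (pr p (fun ω' => Z ω' = Z ω ∧ (X ω', Y ω') = (X ω, Y ω)) / pr p (fun ω' => (X ω', Y ω') = (X ω, Y ω))) - Real.log (pr p (fun ω' => Z ω' = Z ω ∧ Y ω' = Y ω) / pr p (fun ω' => Y ω' = Y ω)) + ∑ j : Fin m, (Real.log (pr p (fun ω' => Z ω' j = Z ω j ∧ Y ω' j = Y ω j) / pr p (fun ω' => Y ω' j = Y ω j)) - Real.log (pr p (fun ω' => Z ω' j = Z ω j ∧ (X ω' (idx j), X ω' (kdx j), Y ω' j) = (X ω (idx j), X ω (kdx j), Y ω j)) / pr p (fun ω' => (X ω' (idx j), X ω' (kdx j), Y ω' j) = (X ω (idx j), X ω (kdx j), Y ω j)))))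
      = (∑ ω, p ω * Real.log (pr p (fun ω' => Z ω' = Z ω ∧ (X ω', Y ω') = (X ω, Y ω)) / pr p (fun ω' => (X ω', Y ω') = (X ω, Y ω)))) - (∑ ω, p ω * Real.log (pr p (fun ω' => Z ω' = Z ω ∧ Y ω' = Y ω) / pr p (fun ω' => Y ω' = Y ω)))
        + ((∑ j : Fin m, ∑ ω : Ω, p ω * (Real.log (pr p (fun ω' => Z ω' j = Z ω j ∧ Y ω' j = Y ω j) / pr p (fun ω' => Y ω' j = Y ω j)))) - ∑ j : Fin m, ∑ ω : Ω, p ω * (Real.log (pr p (fun ω' => Z ω' j = Z ω j ∧ (X ω' (idx j), X ω' (kdx j), Y ω' j) = (X ω (idx j), X ω (kdx j), Y ω j)) / pr p (fun ω' => (X ω' (idx j), X ω' (kdx j), Y ω' j) = (X ω (idx j), X ω (kdx j), Y ω j))))) := by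
    simp only [mul_add, mul_sub, Finset.mul_sum, Finset.sum_add_distrib,
      Finset.sum_sub_distrib]
    rw [c1, c2]
  rw [hrw1, hrw2]
  simp only [hrw3, hrw4]
  simp only [neg_sub_neg]
  rw [Finset.sum_sub_distrib]
  linarith [key, expand]
end

section
/- For g_n as defined and a, b, γ with γ ≥ max(a,b) and n ≥ 2·max(a,b), the midpoint convexity defect satisfies g_n((a+b)/2) − g_n(a)/2 − g_n(b)/2 ≤ (a−b)²/(8nγ), and consequently C(n,2)·[g_n((a+b)/2) − g_n(a)/2 − g_n(b)/2] ≤ n(a−b)²/(16γ). -/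
open Real Set

noncomputable def phi (x : ℝ) : ℝ := (1 - x) * Real.log (1 - x) + x

lemma hasDerivAt_phi {x : ℝ} (hx : x < 1) :
    HasDerivAt phi (-Real.log (1 - x)) x := by
  have h1 : (0:ℝ) < 1 - x := by linarith
  have hlog : HasDerivAt (fun y : ℝ => Real.log (1 - y)) (-(1/(1-x))) x := by
    have := (Real.hasDerivAt_log (ne_of_gt h1)).comp x
      ((hasDerivAt_id x).const_sub 1)
    exact this.congr_deriv (by ring)
  have hmul : HasDerivAt (fun y : ℝ => (1 - y) * Real.log (1 - y))
      ((-1) * Real.log (1 - x) + (1 - x) * (-(1/(1-x)))) x :=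
    ((hasDerivAt_id x).const_sub 1).mul hlog
  have := hmul.add (hasDerivAt_id x)
  refine this.congr_deriv ?_
  rw [mul_neg, mul_one_div_cancel h1.ne']
  ring

lemma hasDerivAt_phi' {x : ℝ} (hx : x < 1) :
    HasDerivAt (fun y : ℝ => -Real.log (1 - y)) (1/(1-x)) x := by
  have h1 : (0:ℝ) < 1 - x := by linarith
  have := ((Real.hasDerivAt_log (ne_of_gt h1)).comp x
    ((hasDerivAt_id x).const_sub 1)).neg
  exact this.congr_deriv (by ring)

lemma phi_convexOn : ConvexOn ℝ (Set.Iic (1/2 : ℝ)) phi := by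
  apply convexOn_of_hasDerivWithinAt2_nonneg (f' := fun x => -Real.log (1-x))
    (f'' := fun x => 1/(1-x)) (convex_Iic _)
  · exact fun x hx => (hasDerivAt_phi (lt_of_le_of_lt hx (by norm_num))).continuousAt.continuousWithinAt
  · intro x hx
    rw [interior_Iic] at hx
    exact (hasDerivAt_phi (lt_trans hx (by norm_num))).hasDerivWithinAt
  · intro x hx
    rw [interior_Iic] at hx
    exact (hasDerivAt_phi' (lt_trans hx (by norm_num))).hasDerivWithinAt
  · intro x hx
    rw [interior_Iic] at hx
    have : (0:ℝ) < 1 - x := by linarith [lt_trans hx (show (1:ℝ)/2 < 1 by norm_num)]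
    positivity

lemma psi_convexOn : ConvexOn ℝ (Set.Iic (1/2 : ℝ)) (fun x => x^2 - phi x) := by
  apply convexOn_of_hasDerivWithinAt2_nonneg (f' := fun x => 2*x + Real.log (1-x))
    (f'' := fun x => 2 - 1/(1-x)) (convex_Iic _)
  · exact fun x hx => (Continuous.continuousAt (by continuity)).continuousWithinAt.sub
      ((hasDerivAt_phi (lt_of_le_of_lt hx (by norm_num))).continuousAt.continuousWithinAt)
  · intro x hx
    rw [interior_Iic] at hx
    have h := ((hasDerivAt_pow 2 x).sub (hasDerivAt_phi (lt_trans hx (by norm_num))))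
    exact (h.congr_deriv (by norm_num)).hasDerivWithinAt
  · intro x hx
    rw [interior_Iic] at hx
    have h1 : x < 1 := lt_trans hx (by norm_num)
    have h := (((hasDerivAt_id x).const_mul 2).sub (hasDerivAt_phi' h1))
    have e : (fun x : ℝ => 2*x + Real.log (1-x)) = ((fun y => 2 * id y) - fun y => -Real.log (1 - y)) := by
      funext y; simp only [Pi.sub_apply, id_eq]; ring
    rw [e]
    exact (h.congr_deriv (by ring)).hasDerivWithinAt
  · intro x hx
    rw [interior_Iic] at hx
    have hx2 : x < 1/2 := hx
    have h1 : (0:ℝ) < 1 - x := by linarith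
    rw [sub_nonneg, div_le_iff₀ h1]
    linarith

lemma midpoint_defect_bound {x y : ℝ} (hx : x ∈ Set.Iic (1/2:ℝ)) (hy : y ∈ Set.Iic (1/2:ℝ)) :
    (phi x + phi y)/2 - phi ((x+y)/2) ≤ (x-y)^2/4 := by
  have h := psi_convexOn.2 hx hy (by norm_num : (0:ℝ) ≤ 1/2) (by norm_num : (0:ℝ) ≤ 1/2) (by norm_num)
  simp only [smul_eq_mul] at h
  have e : (1/2 : ℝ) * x + 1/2 * y = (x+y)/2 := by ring
  rw [e] at h
  nlinarith [h]

lemma midpoint_convex {x y : ℝ} (hx : x ∈ Set.Iic (1/2:ℝ)) (hy : y ∈ Set.Iic (1/2:ℝ)) :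
    phi ((x+y)/2) ≤ (phi x + phi y)/2 := by
  have h := phi_convexOn.2 hx hy (by norm_num : (0:ℝ) ≤ 1/2) (by norm_num : (0:ℝ) ≤ 1/2) (by norm_num)
  simp only [smul_eq_mul] at h
  have e : (1/2 : ℝ) * x + 1/2 * y = (x+y)/2 := by ring
  rw [e] at h
  linarith

/-- Midpoint convexity defect bound for `g_n`: if `γ ≥ max(a,b)` and `n ≥ 2 max(a,b)` then
`g_n((a+b)/2) − g_n(a)/2 − g_n(b)/2 ≤ (a−b)²/(8nγ)`, and consequently
`C(n,2) [g_n((a+b)/2) − g_n(a)/2 − g_n(b)/2] ≤ n(a−b)²/(16γ)`. -/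
theorem gn_midpoint_defect (a b γ : ℝ) (n : ℕ)
    (ha : 0 < a) (hb : 0 < b) (hγ : max a b ≤ γ) (hn : 2 * max a b ≤ (n : ℝ)) :
    let g : ℝ → ℝ := fun c =>
      -(2 * γ / n) * ((1 - c / (2 * γ)) * Real.log (1 - c / (2 * γ)) + c / (2 * γ))
        + ((1 - c / n) * Real.log (1 - c / n) + c / n)
    g ((a + b) / 2) - g a / 2 - g b / 2 ≤ (a - b) ^ 2 / (8 * n * γ)
      ∧ ((n : ℝ) * (n - 1) / 2) * (g ((a + b) / 2) - g a / 2 - g b / 2)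
          ≤ n * (a - b) ^ 2 / (16 * γ) := by
  intro g
  have haγ : a ≤ γ := le_trans (le_max_left a b) hγ
  have hbγ : b ≤ γ := le_trans (le_max_right a b) hγ
  have hγ0 : 0 < γ := lt_of_lt_of_le ha haγ
  have hna : 2 * a ≤ (n:ℝ) := le_trans (by nlinarith [le_max_left a b]) hn
  have hnb : 2 * b ≤ (n:ℝ) := le_trans (by nlinarith [le_max_right a b]) hn
  have hn0 : (0:ℝ) < n := by linarith
  set x := a / (2*γ) with hxdef
  set y := b / (2*γ) with hydef
  set u := a / (n:ℝ) with hudef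
  set v := b / (n:ℝ) with hvdef
  have hx : x ∈ Set.Iic (1/2:ℝ) := by
    rw [Set.mem_Iic, hxdef, div_le_iff₀ (by linarith : (0:ℝ) < 2*γ)]; linarith
  have hy : y ∈ Set.Iic (1/2:ℝ) := by
    rw [Set.mem_Iic, hydef, div_le_iff₀ (by linarith : (0:ℝ) < 2*γ)]; linarith
  have hu : u ∈ Set.Iic (1/2:ℝ) := by
    rw [Set.mem_Iic, hudef, div_le_iff₀ hn0]; linarith
  have hv : v ∈ Set.Iic (1/2:ℝ) := by
    rw [Set.mem_Iic, hvdef, div_le_iff₀ hn0]; linarith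
  have hkey : g ((a + b) / 2) - g a / 2 - g b / 2
      = (2*γ/n) * ((phi x + phi y)/2 - phi ((x+y)/2))
        - ((phi u + phi v)/2 - phi ((u+v)/2)) := by
    have e1 : (a + b) / 2 / (2*γ) = (x+y)/2 := by
      rw [hxdef, hydef]; field_simp
    have e2 : (a + b) / 2 / (n:ℝ) = (u+v)/2 := by
      rw [hudef, hvdef]; field_simp
    simp only [g, phi, e1, e2, hxdef, hydef, hudef, hvdef]
    ring
  have hA := midpoint_defect_bound hx hy
  have hB := midpoint_convex hu hv
  have hD : g ((a + b) / 2) - g a / 2 - g b / 2 ≤ (a - b) ^ 2 / (8 * n * γ) := by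
    rw [hkey]
    have h1 : (2*γ/n) * ((phi x + phi y)/2 - phi ((x+y)/2)) ≤ (2*γ/n) * ((x-y)^2/4) := by
      apply mul_le_mul_of_nonneg_left hA
      positivity
    have h2 : (2*γ/(n:ℝ)) * ((x-y)^2/4) = (a - b) ^ 2 / (8 * n * γ) := by
      rw [hxdef, hydef]; field_simp; ring
    linarith
  refine ⟨hD, ?_⟩
  have hn1 : (1:ℝ) ≤ (n:ℝ) := by
    have : 1 ≤ n := by exact_mod_cast Nat.one_le_iff_ne_zero.mpr (by
      intro h; rw [h] at hn0; simp at hn0)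
    exact_mod_cast this
  obtain ⟨D, hDdef⟩ : ∃ D, D = g ((a + b) / 2) - g a / 2 - g b / 2 := ⟨_, rfl⟩
  rw [← hDdef] at hD ⊢
  clear hDdef hkey hA hB
  clear g
  have hnn : (0:ℝ) ≤ (n:ℝ) * ((n:ℝ) - 1) / 2 := by nlinarith
  rcases le_or_gt D 0 with hDn | hDp
  · have hL : ((n:ℝ) * (n - 1) / 2) * D ≤ 0 :=
      mul_nonpos_of_nonneg_of_nonpos hnn hDn
    have hR : (0:ℝ) ≤ n * (a - b) ^ 2 / (16 * γ) := by positivity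
    linarith
  · have h1 : ((n:ℝ) * (n - 1) / 2) * D ≤ ((n:ℝ)^2/2) * D :=
      mul_le_mul_of_nonneg_right (by nlinarith) hDp.le
    have h2 : ((n:ℝ)^2/2) * D ≤ ((n:ℝ)^2/2) * ((a - b) ^ 2 / (8 * n * γ)) :=
      mul_le_mul_of_nonneg_left hD (by positivity)
    have h3 : ((n:ℝ)^2/2) * ((a - b) ^ 2 / (8 * n * γ)) = n * (a - b) ^ 2 / (16 * γ) := by
      field_simp; ring
    linarith
end

section
/- For a binary-input symmetric-output channel W from {0,1} to finite 𝒴 and the encoded kernel Q(z|u) = W(z | u_1 ⊕ ⋯ ⊕ u_k) with k even, the operator Γ_l is convex on probability measures on {0,1}^l for every l ≥ 1. -/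
namespace BisoGamma
noncomputable section
set_option linter.unnecessarySeqFocus false

def e (a : ZMod 2) : ℝ := if a = 0 then 1 else -1

lemma e_add (a b : ZMod 2) : e (a + b) = e a * e b := by
  have hc : ∀ a : ZMod 2, a = 0 ∨ a = 1 := by decide
  have h11 : (1:ZMod 2) + 1 = 0 := by decide
  have h10 : (1:ZMod 2) ≠ 0 := by decide
  rcases hc a with rfl | rfl <;> rcases hc b with rfl | rfl <;> simp [e, h11, h10]

lemma e_one : e 1 = -1 := if_neg one_ne_zero

lemma sum_zmod2 (f : ZMod 2 → ℝ) : ∑ a : ZMod 2, f a = f 0 + f 1 := by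
  have h : (Finset.univ : Finset (ZMod 2)) = {0, 1} := by decide
  rw [h, Finset.sum_insert (by decide), Finset.sum_singleton]

variable {l : ℕ}

lemma add_self (a : Fin l → ZMod 2) : a + a = 0 :=
  funext fun _ => CharTwo.add_self_eq_zero _

def chi (w u : Fin l → ZMod 2) : ℝ := ∏ r, e (w r * u r)

lemma chi_add (w u v : Fin l → ZMod 2) : chi w (u + v) = chi w u * chi w v := by
  unfold chi
  rw [← Finset.prod_mul_distrib]
  exact Finset.prod_congr rfl fun r _ => by rw [← e_add, Pi.add_apply, mul_add]

lemma chi_zero (w : Fin l → ZMod 2) : chi w 0 = 1 := by simp [chi, e]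

lemma chi_finsum {ι : Type*} (w : Fin l → ZMod 2) (s : Finset ι) (u : ι → Fin l → ZMod 2) :
    chi w (∑ i ∈ s, u i) = ∏ i ∈ s, chi w (u i) := by
  classical
  induction s using Finset.cons_induction with
  | empty => simp [chi_zero]
  | cons a s ha ih => rw [Finset.sum_cons, Finset.prod_cons, chi_add, ih]

lemma e_finsum {ι : Type*} (s : Finset ι) (a : ι → ZMod 2) :
    e (∑ i ∈ s, a i) = ∏ i ∈ s, e (a i) := by
  classical
  induction s using Finset.cons_induction with
  | empty => simp [e]
  | cons x s hx ih => rw [Finset.sum_cons, Finset.prod_cons, e_add, ih]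

lemma sum_chi (u : Fin l → ZMod 2) :
    ∑ w : Fin l → ZMod 2, chi w u = if u = 0 then (2:ℝ)^l else 0 := by
  unfold chi
  rw [← Fintype.prod_sum (f := fun r (a : ZMod 2) => e (a * u r))]
  have hfac : ∀ r, ∑ a : ZMod 2, e (a * u r) = if u r = 0 then 2 else 0 := by
    intro r
    rw [sum_zmod2]
    by_cases h : u r = 0 <;> simp [e, h] <;> norm_num
  simp only [hfac]
  by_cases h : u = 0
  · subst h; simp
  · obtain ⟨r, hr⟩ : ∃ r, u r ≠ 0 := by
      by_contra hc; push_neg at hc; exact h (funext hc)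
    rw [if_neg h]
    exact Finset.prod_eq_zero (Finset.mem_univ r) (by simp [hr])

/-- Fourier representation of the Γ-form. -/
lemma key (h : (Fin l → ZMod 2) → ℝ) (k : ℕ) (ν : (Fin l → ZMod 2) → ℝ) :
    ∑ u : Fin k → (Fin l → ZMod 2), h (∑ i, u i) * ∏ i, ν (u i)
      = ((2:ℝ)^l)⁻¹ * ∑ w : Fin l → ZMod 2,
          (∑ s, chi w s * h s) * (∑ v, chi w v * ν v) ^ k := by
  have expand : ∀ w : Fin l → ZMod 2,
      (∑ s, chi w s * h s) * (∑ v, chi w v * ν v) ^ k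
        = ∑ u : Fin k → (Fin l → ZMod 2), ∑ s,
            chi w (s + ∑ i, u i) * (h s * ∏ i, ν (u i)) := by
    intro w
    rw [Fintype.sum_pow, Finset.sum_mul_sum]
    rw [Finset.sum_comm]
    refine Finset.sum_congr rfl fun u _ => Finset.sum_congr rfl fun s _ => ?_
    rw [chi_add, chi_finsum, Finset.prod_mul_distrib]
    ring
  have inner : ∀ u : Fin k → (Fin l → ZMod 2),
      ∑ s, (if s + ∑ i, u i = 0 then (2:ℝ)^l else 0) * (h s * ∏ i, ν (u i))
        = (2:ℝ)^l * (h (∑ i, u i) * ∏ i, ν (u i)) := by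
    intro u
    rw [Finset.sum_eq_single (∑ i, u i)]
    · rw [if_pos (add_self _)]
    · intro s _ hs
      rw [if_neg, zero_mul]
      intro hcon
      apply hs
      have h2 : s + ((∑ i, u i) + (∑ i, u i)) = 0 + (∑ i, u i) := by
        rw [← add_assoc, hcon, zero_add]
      rw [add_self, add_zero, zero_add] at h2
      exact h2
    · intro hmem; exact absurd (Finset.mem_univ _) hmem
  simp only [expand]
  rw [Finset.sum_comm, Finset.mul_sum]
  refine Finset.sum_congr rfl fun u _ => ?_
  rw [Finset.sum_comm]
  have : ∑ s : Fin l → ZMod 2, ∑ w : Fin l → ZMod 2,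
      chi w (s + ∑ i, u i) * (h s * ∏ i, ν (u i))
      = ∑ s, (if s + ∑ i, u i = 0 then (2:ℝ)^l else 0) * (h s * ∏ i, ν (u i)) := by
    refine Finset.sum_congr rfl fun s _ => ?_
    rw [← Finset.sum_mul, sum_chi]
  rw [this, inner, inv_mul_cancel_left₀ (by positivity : ((2:ℝ)^l) ≠ 0)]

section Channel

variable {𝒴 : Type} [Fintype 𝒴] (W : ZMod 2 → 𝒴 → ℝ)

/-- The "Fourier factor". -/
def psi (W : ZMod 2 → 𝒴 → ℝ) (a : ZMod 2) (z : 𝒴) : ℝ :=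
  if a = 0 then 2 - W 0 z - W 1 z else W 1 z - W 0 z

lemma hhat_formula (w : Fin l → ZMod 2) :
    ∑ s : Fin l → ZMod 2, chi w s * (∑ z, ∏ r, (1 - W (s r) z))
      = ∑ z, ∏ r, psi W (w r) z := by
  have step1 : ∀ s : Fin l → ZMod 2, chi w s * (∑ z, ∏ r, (1 - W (s r) z))
      = ∑ z, ∏ r, (e (w r * s r) * (1 - W (s r) z)) := by
    intro s
    rw [Finset.mul_sum]
    exact Finset.sum_congr rfl fun z _ => by
      rw [Finset.prod_mul_distrib]; rfl
  simp only [step1]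
  rw [Finset.sum_comm]
  refine Finset.sum_congr rfl fun z _ => ?_
  rw [← Fintype.prod_sum (f := fun r (a : ZMod 2) => e (w r * a) * (1 - W a z))]
  refine Finset.prod_congr rfl fun r _ => ?_
  rw [sum_zmod2]
  by_cases h : w r = 0
  · simp [h, e, psi]; ring
  · have h1 : w r = 1 := by
      generalize hwr : w r = a at h
      fin_cases a
      · exact absurd rfl h
      · rfl
    rw [h1]
    simp [e, psi]
    try ring

lemma hhat_nonneg (hW0 : ∀ x y, 0 ≤ W x y) (hW1 : ∀ x, ∑ y, W x y = 1)
    (σ : Equiv.Perm 𝒴) (hσ : ∀ y, σ (σ y) = y) (hsym : ∀ y, W 0 (σ y) = W 1 y)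
    (w : Fin l → ZMod 2) :
    0 ≤ ∑ z, ∏ r, psi W (w r) z := by
  have hle : ∀ x z, W x z ≤ 1 := by
    intro x z
    rw [← hW1 x]
    exact Finset.single_le_sum (fun y _ => hW0 x y) (Finset.mem_univ z)
  have hsym' : ∀ y, W 1 (σ y) = W 0 y := by
    intro y
    have h := hsym (σ y)
    rw [hσ] at h
    exact h.symm
  have hpsi0 : ∀ z, 0 ≤ psi W 0 z := by
    intro z
    have p2 : psi W 0 z = 2 - W 0 z - W 1 z := if_pos rfl
    rw [p2]
    linarith [hle 0 z, hle 1 z]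
  have hcases : ∀ a : ZMod 2, a = 0 ∨ a = 1 := by decide
  have hpsi_sigma : ∀ a z, psi W a (σ z) = e a * psi W a z := by
    intro a z
    rcases hcases a with ha | ha <;> subst ha
    · have p1 : psi W 0 (σ z) = 2 - W 0 (σ z) - W 1 (σ z) := if_pos rfl
      have p2 : psi W 0 z = 2 - W 0 z - W 1 z := if_pos rfl
      have q : e (0:ZMod 2) = 1 := if_pos rfl
      rw [p1, p2, q, hsym, hsym']
      ring
    · have p1 : psi W 1 (σ z) = W 1 (σ z) - W 0 (σ z) := if_neg one_ne_zero
      have p2 : psi W 1 z = W 1 z - W 0 z := if_neg one_ne_zero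
      have q : e (1:ZMod 2) = -1 := if_neg one_ne_zero
      rw [p1, p2, q, hsym, hsym']
      ring
  by_cases hsw : ∑ r, w r = 0
  · -- every term is nonnegative
    refine Finset.sum_nonneg fun z _ => ?_
    classical
    rw [← Finset.prod_filter_mul_prod_filter_not Finset.univ (fun r => w r = 0)]
    have e1 : ∏ r ∈ Finset.univ.filter (fun r => w r = 0), psi W (w r) z
        = psi W 0 z ^ (Finset.univ.filter (fun r => w r = 0)).card := by
      rw [Finset.prod_congr rfl (fun r hr => by
        rw [(Finset.mem_filter.mp hr).2]), Finset.prod_const]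
    have e2 : ∏ r ∈ Finset.univ.filter (fun r => ¬ w r = 0), psi W (w r) z
        = psi W 1 z ^ (Finset.univ.filter (fun r => ¬ w r = 0)).card := by
      rw [Finset.prod_congr rfl (fun r hr => by
        have h := (Finset.mem_filter.mp hr).2
        have h1 : w r = 1 := by
          generalize hwr : w r = a at h
          fin_cases a
          · exact absurd rfl h
          · rfl
        rw [h1]), Finset.prod_const]
    rw [e1, e2]
    have heven : Even (Finset.univ.filter (fun r => ¬ w r = 0)).card := by
      have hsum : ∑ r ∈ Finset.univ.filter (fun r => ¬ w r = 0), w r = ∑ r, w r :=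
        Finset.sum_filter_of_ne (fun r _ h => h)
      have hone : ∑ r ∈ Finset.univ.filter (fun r => ¬ w r = 0), w r
          = ((Finset.univ.filter (fun r => ¬ w r = 0)).card : ZMod 2) := by
        rw [Finset.sum_congr rfl (fun r hr => by
          have h := (Finset.mem_filter.mp hr).2
          have h1 : w r = 1 := by
            generalize hwr : w r = a at h
            fin_cases a
            · exact absurd rfl h
            · rfl
          rw [h1]), Finset.sum_const, nsmul_eq_mul, mul_one]
      have : ((Finset.univ.filter (fun r => ¬ w r = 0)).card : ZMod 2) = 0 := by
        rw [← hone, hsum, hsw]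
      rw [ZMod.natCast_eq_zero_iff] at this
      exact (even_iff_two_dvd).mpr this
    exact mul_nonneg (pow_nonneg (hpsi0 z) _) (heven.pow_nonneg _)
  · -- the sum is zero
    have hsw1 : ∑ r, w r = 1 := by
      generalize hs : ∑ r, w r = a at hsw
      fin_cases a
      · exact absurd rfl hsw
      · rfl
    have hflip : ∀ z, ∏ r, psi W (w r) (σ z) = - ∏ r, psi W (w r) z := by
      intro z
      calc ∏ r, psi W (w r) (σ z) = ∏ r, (e (w r) * psi W (w r) z) := by
            exact Finset.prod_congr rfl fun r _ => hpsi_sigma (w r) z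
        _ = (∏ r, e (w r)) * ∏ r, psi W (w r) z := Finset.prod_mul_distrib
        _ = - ∏ r, psi W (w r) z := by
            rw [← e_finsum, hsw1, e_one, neg_one_mul]
    have hzero : ∑ z, ∏ r, psi W (w r) z = - ∑ z, ∏ r, psi W (w r) z := by
      conv_lhs => rw [← Equiv.sum_comp σ (fun z => ∏ r, psi W (w r) z)]
      rw [Finset.sum_congr rfl fun z _ => hflip z, Finset.sum_neg_distrib]
    linarith [hzero]

end Channel

lemma transpose_sum {k : ℕ} (g : (Fin l → ZMod 2) → ℝ) (ν : (Fin l → ZMod 2) → ℝ) :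
    ∑ U : Fin l → (Fin k → ZMod 2), g (fun r => ∑ i, U r i) * ∏ i, ν (fun r => U r i)
      = ∑ u : Fin k → (Fin l → ZMod 2), g (∑ i, u i) * ∏ i, ν (u i) := by
  refine Fintype.sum_equiv (Equiv.piComm fun _ _ => ZMod 2) _ _ fun U => ?_
  have h1 : (∑ i, (Equiv.piComm (fun _ _ => ZMod 2) U) i) = fun r => ∑ i, U r i := by
    funext r
    rw [Finset.sum_apply]
    rfl
  rw [h1]
  rfl

lemma convexOn_finset_sum {E : Type*} [AddCommMonoid E] [Module ℝ E] {ι : Type*}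
    (t : Finset ι) {s : Set E} (hs : Convex ℝ s) (f : ι → E → ℝ)
    (hf : ∀ i ∈ t, ConvexOn ℝ s (f i)) :
    ConvexOn ℝ s (fun x => ∑ i ∈ t, f i x) := by
  classical
  revert hf
  induction t using Finset.cons_induction with
  | empty => intro _; simpa using convexOn_const 0 hs
  | cons a t ha ih =>
    intro hf
    simp only [Finset.sum_cons]
    exact (hf a (Finset.mem_cons_self _ _)).add
      (ih fun i hi => hf i (Finset.mem_cons.mpr (Or.inr hi)))

def Lmap (w : Fin l → ZMod 2) : ((Fin l → ZMod 2) → ℝ) →ₗ[ℝ] ℝ where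
  toFun := fun ν => ∑ v, chi w v * ν v
  map_add' := fun f g => by
    simp [mul_add, Finset.sum_add_distrib]
  map_smul' := fun c f => by
    simp [Finset.mul_sum, smul_eq_mul, mul_left_comm]

lemma convexOn_pow_linear (w : Fin l → ZMod 2) {k : ℕ} (hk : Even k) :
    ConvexOn ℝ Set.univ fun ν : (Fin l → ZMod 2) → ℝ => (∑ v, chi w v * ν v) ^ k := by
  have h := (Even.convexOn_pow (𝕜 := ℝ) hk).comp_affineMap (Lmap w).toAffineMap
  rw [Set.preimage_univ] at h
  exact h

end
end BisoGamma

/-- For a binary-input symmetric-output channel `W` (symmetry witnessed by an involution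
`σ` of the output alphabet exchanging the two rows) and the encoded kernel
`Q(z|u) = W(z | u₁ ⊕ ⋯ ⊕ u_k)` with `k` even, the operator `Γ_l` is convex on
probability measures on `{0,1}^l` for every `l ≥ 1`. -/
theorem encoded_biso_gamma_convex
    (𝒴 : Type) [Fintype 𝒴] (W : ZMod 2 → 𝒴 → ℝ)
    (hW0 : ∀ x y, 0 ≤ W x y) (hW1 : ∀ x, ∑ y, W x y = 1)
    (σ : Equiv.Perm 𝒴) (hσ : ∀ y, σ (σ y) = y) (hsym : ∀ y, W 0 (σ y) = W 1 y)
    (k l : ℕ) (hk : Even k) (hk1 : 1 ≤ k) (hl : 1 ≤ l) :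
    ConvexOn ℝ {ν : (Fin l → ZMod 2) → ℝ | (∀ x, 0 ≤ ν x) ∧ ∑ x, ν x = 1}
      (fun ν => ((Fintype.card 𝒴 : ℝ))⁻¹ *
        ∑ U : Fin l → (Fin k → ZMod 2),
          (∑ z : 𝒴, ∏ r : Fin l, (1 - W (∑ i, U r i) z)) *
            ∏ i : Fin k, ν (fun r => U r i)) := by
  classical
  open BisoGamma in
  set h0 : (Fin l → ZMod 2) → ℝ := fun s => ∑ z, ∏ r, (1 - W (s r) z) with hh0
  have hhat : ∀ w : Fin l → ZMod 2, 0 ≤ ∑ s, BisoGamma.chi w s * h0 s := by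
    intro w
    rw [hh0, BisoGamma.hhat_formula]
    exact BisoGamma.hhat_nonneg W hW0 hW1 σ hσ hsym w
  have hS : Convex ℝ {ν : (Fin l → ZMod 2) → ℝ | (∀ x, 0 ≤ ν x) ∧ ∑ x, ν x = 1} := by
    rintro x ⟨hx0, hx1⟩ y ⟨hy0, hy1⟩ a b ha hb hab
    constructor
    · intro v
      have : (a • x + b • y) v = a * x v + b * y v := rfl
      rw [this]
      exact add_nonneg (mul_nonneg ha (hx0 v)) (mul_nonneg hb (hy0 v))
    · have : ∀ v, (a • x + b • y) v = a * x v + b * y v := fun _ => rfl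
      simp only [this]
      rw [Finset.sum_add_distrib, ← Finset.mul_sum, ← Finset.mul_sum, hx1, hy1,
        mul_one, mul_one, hab]
  have hfun : (fun ν : (Fin l → ZMod 2) → ℝ => ((Fintype.card 𝒴 : ℝ))⁻¹ *
        ∑ U : Fin l → (Fin k → ZMod 2),
          (∑ z : 𝒴, ∏ r : Fin l, (1 - W (∑ i, U r i) z)) *
            ∏ i : Fin k, ν (fun r => U r i))
      = fun ν => (((Fintype.card 𝒴 : ℝ))⁻¹ * ((2:ℝ)^l)⁻¹) •
          ∑ w : Fin l → ZMod 2,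
            (∑ s, BisoGamma.chi w s * h0 s) * (∑ v, BisoGamma.chi w v * ν v) ^ k := by
    funext ν
    rw [smul_eq_mul, mul_assoc]
    congr 1
    have t1 : ∑ U : Fin l → (Fin k → ZMod 2),
        (∑ z : 𝒴, ∏ r : Fin l, (1 - W (∑ i, U r i) z)) * ∏ i : Fin k, ν (fun r => U r i)
        = ∑ U : Fin l → (Fin k → ZMod 2), h0 (fun r => ∑ i, U r i) * ∏ i, ν (fun r => U r i) :=
      rfl
    rw [t1, BisoGamma.transpose_sum h0 ν, BisoGamma.key h0 k ν]
  rw [hfun]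
  refine ConvexOn.subset ?_ (Set.subset_univ _) hS
  refine ConvexOn.smul (by positivity) ?_
  refine BisoGamma.convexOn_finset_sum Finset.univ convex_univ _ fun w _ => ?_
  have hterm := ConvexOn.smul (hhat w) (BisoGamma.convexOn_pow_linear w hk)
  exact hterm
end
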